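/- Let n ≥ 2 be even, and let f(x,y) = f₀xⁿ + f₁xⁿ⁻¹y + ⋯ + fₙyⁿ be a binary n-ic form with real coefficients that is negative definite, i.e., f(x,y) < 0 for all (x,y) ∈ ℝ² with (x,y) ≠ (0,0), and such that the degree-n polynomial f(x,1) is squarefree. Then there exists no pair (A,B) of real symmetric n×n matrices with (−1)^{n/2} det(Ax − By) = f(x,y) for all x, y ∈ ℝ. -/

import Mathlib

open Matrix

noncomputable section

namespace NROrbits

variable {n : ℕ}

/-- The quadratic form of a matrix. -/
def qf (M : Matrix (Fin n) (Fin n) ℝ) (v : EuclideanSpace ℝ (Fin n)) : ℝ :=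
  dotProduct (v : Fin n → ℝ) (M *ᵥ (v : Fin n → ℝ))

lemma inner_eq_dot (x y : EuclideanSpace ℝ (Fin n)) :
    (inner ℝ x y : ℝ) = dotProduct (x : Fin n → ℝ) (y : Fin n → ℝ) := by
  simp [PiLp.inner_apply, dotProduct, mul_comm]

lemma qf_smul (M : Matrix (Fin n) (Fin n) ℝ) (c : ℝ) (v : EuclideanSpace ℝ (Fin n)) :
    qf M (c • v) = c ^ 2 * qf M v := by
  show dotProduct (c • (v : Fin n → ℝ)) (M *ᵥ (c • (v : Fin n → ℝ))) = _
  rw [Matrix.mulVec_smul, dotProduct_smul, smul_dotProduct]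
  simp [qf, smul_eq_mul]; ring

lemma qf_neg (M : Matrix (Fin n) (Fin n) ℝ) (v : EuclideanSpace ℝ (Fin n)) :
    qf (-M) v = - qf M v := by
  simp [qf, Matrix.neg_mulVec]

lemma qf_eq {M : Matrix (Fin n) (Fin n) ℝ} (hM : M.IsHermitian) (v : EuclideanSpace ℝ (Fin n)) :
    qf M v = ∑ i, hM.eigenvalues i * (hM.eigenvectorBasis.repr v i) ^ 2 := by
  set b := hM.eigenvectorBasis with hb
  have hsymm : ∀ i j, M j i = M i j := by
    intro i j
    have := congrFun (congrFun hM.eq i) j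
    simpa [Matrix.conjTranspose_apply] using this
  have htr : Mᵀ = M := by ext i j; exact hsymm i j
  have key : ∀ i, b.repr (WithLp.toLp 2 (M *ᵥ (v : Fin n → ℝ) : Fin n → ℝ) : EuclideanSpace ℝ (Fin n)) i
      = hM.eigenvalues i * b.repr v i := by
    intro i
    rw [OrthonormalBasis.repr_apply_apply, OrthonormalBasis.repr_apply_apply,
      inner_eq_dot, inner_eq_dot, WithLp.ofLp_toLp, dotProduct_mulVec]
    have hvm : (b i : Fin n → ℝ) ᵥ* M = M *ᵥ (b i : Fin n → ℝ) := by
      conv_lhs => rw [← htr]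
      rw [vecMul_transpose]
    rw [hvm]
    have hmv : M *ᵥ (b i : Fin n → ℝ)
        = hM.eigenvalues i • (b i : Fin n → ℝ) := hM.mulVec_eigenvectorBasis i
    rw [hmv, smul_dotProduct]
    simp [smul_eq_mul]
  have h1 : qf M v = (inner ℝ v (WithLp.toLp 2 (M *ᵥ (v : Fin n → ℝ) : Fin n → ℝ) : EuclideanSpace ℝ (Fin n)) : ℝ) :=
    (inner_eq_dot v (WithLp.toLp 2 (M *ᵥ (v : Fin n → ℝ)))).symm
  rw [h1, ← b.repr.inner_map_map v _]
  rw [PiLp.inner_apply]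
  refine Finset.sum_congr rfl fun i _ => ?_
  rw [key i]
  simp [RCLike.inner_apply]
  ring

/-- Span of the eigenvectors indexed by `S`. -/
def eigSpan {M : Matrix (Fin n) (Fin n) ℝ} (hM : M.IsHermitian) (S : Finset (Fin n)) :
    Submodule ℝ (EuclideanSpace ℝ (Fin n)) :=
  Submodule.span ℝ (⇑hM.eigenvectorBasis '' ↑S)

lemma finrank_eigSpan {M : Matrix (Fin n) (Fin n) ℝ} (hM : M.IsHermitian) (S : Finset (Fin n)) :
    Module.finrank ℝ (eigSpan hM S) = S.card := by
  have hli : LinearIndependent ℝ (fun i : {x // x ∈ S} => hM.eigenvectorBasis i) :=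
    (hM.eigenvectorBasis.orthonormal.linearIndependent).comp _ Subtype.val_injective
  have hrange : Set.range (fun i : {x // x ∈ S} => hM.eigenvectorBasis i)
      = ⇑hM.eigenvectorBasis '' ↑S := by
    ext x; simp
  rw [eigSpan, ← hrange, finrank_span_eq_card hli, Fintype.card_coe]

lemma repr_eq_zero_of_mem_eigSpan {M : Matrix (Fin n) (Fin n) ℝ} (hM : M.IsHermitian)
    {S : Finset (Fin n)} {v : EuclideanSpace ℝ (Fin n)} (hv : v ∈ eigSpan hM S) :
    ∀ i ∉ S, hM.eigenvectorBasis.repr v i = 0 := by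
  intro i hi
  induction hv using Submodule.span_induction with
  | mem x hx =>
    obtain ⟨j, hj, rfl⟩ := hx
    rw [OrthonormalBasis.repr_self]
    have : i ≠ j := fun h => hi (h ▸ hj)
    simp [EuclideanSpace.single_apply, this]
  | zero => simp
  | add x y hx hy ihx ihy => simp [map_add, ihx, ihy]
  | smul a x hx ihx => simp [_root_.map_smul, ihx]

section Cards

variable {M : Matrix (Fin n) (Fin n) ℝ} (hM : M.IsHermitian)

def posCard : ℕ := (Finset.univ.filter fun i => 0 < hM.eigenvalues i).card

def negCard : ℕ := (Finset.univ.filter fun i => hM.eigenvalues i < 0).card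

lemma posCard_congr {N : Matrix (Fin n) (Fin n) ℝ} (h : M = N) (hN : N.IsHermitian) :
    posCard hM = posCard hN := by subst h; rfl

lemma qf_pos_of_mem {v : EuclideanSpace ℝ (Fin n)}
    (hv : v ∈ eigSpan hM (Finset.univ.filter fun i => 0 < hM.eigenvalues i)) (hv0 : v ≠ 0) :
    0 < qf M v := by
  have hcoord := repr_eq_zero_of_mem_eigSpan hM hv
  rw [qf_eq hM]
  have hex : ∃ i, hM.eigenvectorBasis.repr v i ≠ 0 := by
    by_contra hall
    push_neg at hall
    apply hv0
    have : hM.eigenvectorBasis.repr v = 0 := by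
      ext i; exact hall i
    simpa using hM.eigenvectorBasis.repr.map_eq_zero_iff.1 this
  obtain ⟨i, hi⟩ := hex
  have hipos : 0 < hM.eigenvalues i := by
    by_contra hneg
    exact hi (hcoord i (by simp [hneg]))
  refine Finset.sum_pos' (fun j _ => ?_) ⟨i, Finset.mem_univ i, ?_⟩
  · by_cases hj : 0 < hM.eigenvalues j
    · positivity
    · rw [hcoord j (by simp [hj])]; simp
  · have : (0:ℝ) < (hM.eigenvectorBasis.repr v i) ^ 2 := by positivity
    positivity

lemma qf_neg_of_mem {v : EuclideanSpace ℝ (Fin n)}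
    (hv : v ∈ eigSpan hM (Finset.univ.filter fun i => hM.eigenvalues i < 0)) (hv0 : v ≠ 0) :
    qf M v < 0 := by
  have hcoord := repr_eq_zero_of_mem_eigSpan hM hv
  rw [qf_eq hM]
  have hex : ∃ i, hM.eigenvectorBasis.repr v i ≠ 0 := by
    by_contra hall
    push_neg at hall
    apply hv0
    have : hM.eigenvectorBasis.repr v = 0 := by
      ext i; exact hall i
    simpa using hM.eigenvectorBasis.repr.map_eq_zero_iff.1 this
  obtain ⟨i, hi⟩ := hex
  have hineg : hM.eigenvalues i < 0 := by
    by_contra hneg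
    exact hi (hcoord i (by simp [hneg]))
  have : 0 < ∑ j, -(hM.eigenvalues j * (hM.eigenvectorBasis.repr v j) ^ 2) := by
    refine Finset.sum_pos' (fun j _ => ?_) ⟨i, Finset.mem_univ i, ?_⟩
    · by_cases hj : hM.eigenvalues j < 0
      · have : (0:ℝ) ≤ (hM.eigenvectorBasis.repr v j) ^ 2 := sq_nonneg _
        nlinarith
      · rw [hcoord j (by simp [hj])]; simp
    · have h2 : (0:ℝ) < (hM.eigenvectorBasis.repr v i) ^ 2 := by positivity
      nlinarith
  have := Finset.sum_neg_distrib (f := fun j => hM.eigenvalues j * (hM.eigenvectorBasis.repr v j) ^ 2) ▸ this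
  linarith [this]

lemma qf_nonpos_of_mem {v : EuclideanSpace ℝ (Fin n)}
    (hv : v ∈ eigSpan hM (Finset.univ.filter fun i => ¬ 0 < hM.eigenvalues i)) :
    qf M v ≤ 0 := by
  have hcoord := repr_eq_zero_of_mem_eigSpan hM hv
  rw [qf_eq hM]
  refine Finset.sum_nonpos fun j _ => ?_
  by_cases hj : 0 < hM.eigenvalues j
  · rw [hcoord j (by simp [hj])]; simp
  · have h2 : (0:ℝ) ≤ (hM.eigenvectorBasis.repr v j) ^ 2 := sq_nonneg _
    nlinarith [le_of_not_gt hj]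

lemma qf_nonneg_of_mem {v : EuclideanSpace ℝ (Fin n)}
    (hv : v ∈ eigSpan hM (Finset.univ.filter fun i => ¬ hM.eigenvalues i < 0)) :
    0 ≤ qf M v := by
  have hcoord := repr_eq_zero_of_mem_eigSpan hM hv
  rw [qf_eq hM]
  refine Finset.sum_nonneg fun j _ => ?_
  by_cases hj : hM.eigenvalues j < 0
  · rw [hcoord j (by simp [hj])]; simp
  · have h2 : (0:ℝ) ≤ (hM.eigenvectorBasis.repr v j) ^ 2 := sq_nonneg _
    nlinarith [le_of_not_gt hj]

lemma sylvester_pos (V : Submodule ℝ (EuclideanSpace ℝ (Fin n)))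
    (hV : ∀ v ∈ V, v ≠ 0 → 0 < qf M v) :
    Module.finrank ℝ V ≤ posCard hM := by
  set W := eigSpan hM (Finset.univ.filter fun i => ¬ 0 < hM.eigenvalues i) with hW
  have hdisj : V ⊓ W = ⊥ := by
    rw [Submodule.eq_bot_iff]
    rintro v ⟨hv1, hv2⟩
    by_contra h0
    have := hV v hv1 h0
    have := qf_nonpos_of_mem hM hv2
    linarith
  have h1 := Submodule.finrank_sup_add_finrank_inf_eq V W
  rw [hdisj] at h1
  have h2 : Module.finrank ℝ ↥(V ⊔ W) ≤ n := by
    have := Submodule.finrank_le (V ⊔ W)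
    rwa [finrank_euclideanSpace_fin] at this
  have h3 : Module.finrank ℝ W = n - posCard hM := by
    rw [hW, finrank_eigSpan]
    have := Finset.card_filter_add_card_filter_not (s := Finset.univ)
      (p := fun i => 0 < hM.eigenvalues i)
    simp only [Finset.card_univ, Fintype.card_fin] at this
    unfold posCard
    omega
  have h4 : posCard hM ≤ n := by
    have := Finset.card_filter_le Finset.univ (fun i => 0 < hM.eigenvalues i)
    simpa [posCard] using this
  simp only [finrank_bot, add_zero] at h1
  omega

lemma sylvester_neg (V : Submodule ℝ (EuclideanSpace ℝ (Fin n)))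
    (hV : ∀ v ∈ V, v ≠ 0 → qf M v < 0) :
    Module.finrank ℝ V ≤ negCard hM := by
  set W := eigSpan hM (Finset.univ.filter fun i => ¬ hM.eigenvalues i < 0) with hW
  have hdisj : V ⊓ W = ⊥ := by
    rw [Submodule.eq_bot_iff]
    rintro v ⟨hv1, hv2⟩
    by_contra h0
    have := hV v hv1 h0
    have := qf_nonneg_of_mem hM hv2
    linarith
  have h1 := Submodule.finrank_sup_add_finrank_inf_eq V W
  rw [hdisj] at h1
  have h2 : Module.finrank ℝ ↥(V ⊔ W) ≤ n := by
    have := Submodule.finrank_le (V ⊔ W)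
    rwa [finrank_euclideanSpace_fin] at this
  have h3 : Module.finrank ℝ W = n - negCard hM := by
    rw [hW, finrank_eigSpan]
    have := Finset.card_filter_add_card_filter_not (s := Finset.univ)
      (p := fun i => hM.eigenvalues i < 0)
    simp only [Finset.card_univ, Fintype.card_fin] at this
    unfold negCard
    omega
  have h4 : negCard hM ≤ n := by
    have := Finset.card_filter_le Finset.univ (fun i => hM.eigenvalues i < 0)
    simpa [negCard] using this
  simp only [finrank_bot, add_zero] at h1
  omega

lemma posCard_neg_eq (hM' : (-M).IsHermitian) : posCard hM' = negCard hM := by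
  refine le_antisymm ?_ ?_
  · have h1 : ∀ v ∈ eigSpan hM' (Finset.univ.filter fun i => 0 < hM'.eigenvalues i),
        v ≠ 0 → qf M v < 0 := by
      intro v hv hv0
      have := qf_pos_of_mem hM' hv hv0
      rw [qf_neg] at this
      linarith
    have := sylvester_neg hM _ h1
    rwa [finrank_eigSpan] at this
  · have h1 : ∀ v ∈ eigSpan hM (Finset.univ.filter fun i => hM.eigenvalues i < 0),
        v ≠ 0 → 0 < qf (-M) v := by
      intro v hv hv0
      have := qf_neg_of_mem hM hv hv0
      rw [qf_neg]
      linarith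
    have := sylvester_pos hM' _ h1
    rwa [finrank_eigSpan] at this

lemma eigenvalues_ne_zero (hdet : M.det ≠ 0) : ∀ i, hM.eigenvalues i ≠ 0 := by
  intro i h0
  apply hdet
  rw [hM.det_eq_prod_eigenvalues]
  exact Finset.prod_eq_zero (Finset.mem_univ i) (by rw [h0]; simp)

lemma card_sum (hdet : M.det ≠ 0) : posCard hM + negCard hM = n := by
  have hev := eigenvalues_ne_zero hM hdet
  have : (Finset.univ.filter fun i => hM.eigenvalues i < 0)
      = (Finset.univ.filter fun i => ¬ 0 < hM.eigenvalues i) := by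
    refine Finset.filter_congr fun i _ => ?_
    constructor
    · intro h; exact not_lt.2 (le_of_lt h)
    · intro h; exact lt_of_le_of_ne (not_lt.1 h) (hev i)
  unfold posCard negCard
  rw [this]
  have := Finset.card_filter_add_card_filter_not (s := Finset.univ)
    (p := fun i => 0 < hM.eigenvalues i)
  simpa using this

lemma det_sign (hev : ∀ i, hM.eigenvalues i ≠ 0) :
    0 < (-1 : ℝ) ^ (negCard hM) * M.det := by
  rw [hM.det_eq_prod_eigenvalues]
  simp only [RCLike.ofReal_real_eq_id, id_eq]
  rw [← Finset.prod_filter_mul_prod_filter_not Finset.univ (fun i => hM.eigenvalues i < 0)]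
  have h1 : (0:ℝ) < ∏ i ∈ (Finset.univ.filter fun i => hM.eigenvalues i < 0), (-(hM.eigenvalues i)) :=
    Finset.prod_pos fun i hi => by
      have := (Finset.mem_filter.1 hi).2; linarith
  have h2 : (0:ℝ) < ∏ i ∈ (Finset.univ.filter fun i => ¬ hM.eigenvalues i < 0), hM.eigenvalues i :=
    Finset.prod_pos fun i hi => by
      have h := (Finset.mem_filter.1 hi).2
      exact lt_of_le_of_ne (not_lt.1 h) (Ne.symm (hev i))
  have h3 : (∏ i ∈ (Finset.univ.filter fun i => hM.eigenvalues i < 0), (-(hM.eigenvalues i)))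
      = (-1:ℝ) ^ (negCard hM) * ∏ i ∈ (Finset.univ.filter fun i => hM.eigenvalues i < 0), hM.eigenvalues i := by
    unfold negCard
    rw [Finset.prod_congr rfl (g := fun i => (-1) * hM.eigenvalues i) (fun i _ => by ring),
      Finset.prod_mul_distrib, Finset.prod_const]
  calc (0:ℝ) < (∏ i ∈ (Finset.univ.filter fun i => hM.eigenvalues i < 0), (-(hM.eigenvalues i)))
      * ∏ i ∈ (Finset.univ.filter fun i => ¬ hM.eigenvalues i < 0), hM.eigenvalues i :=
        mul_pos h1 h2
    _ = (-1:ℝ) ^ (negCard hM) * ((∏ i ∈ (Finset.univ.filter fun i => hM.eigenvalues i < 0), hM.eigenvalues i) * ∏ i ∈ (Finset.univ.filter fun i => ¬ hM.eigenvalues i < 0), hM.eigenvalues i) := by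
        rw [h3]; ring

end Cards

lemma isHermitian_of_isSymm {M : Matrix (Fin n) (Fin n) ℝ} (h : M.IsSymm) : M.IsHermitian := by
  unfold Matrix.IsHermitian
  ext i j
  rw [Matrix.conjTranspose_apply, star_trivial, h.apply]

lemma eventually_posdef (A B : Matrix (Fin n) (Fin n) ℝ) (t₀ : ℝ)
    (V : Submodule ℝ (EuclideanSpace ℝ (Fin n)))
    (hV : ∀ v ∈ V, v ≠ 0 → 0 < qf (Real.cos t₀ • A - Real.sin t₀ • B) v) :
    ∀ᶠ t in nhds t₀, ∀ v ∈ V, v ≠ 0 → 0 < qf (Real.cos t • A - Real.sin t • B) v := by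
  have hcont : Continuous fun p : ℝ × EuclideanSpace ℝ (Fin n) =>
      qf (Real.cos p.1 • A - Real.sin p.1 • B) p.2 := by
    have hrw : (fun p : ℝ × EuclideanSpace ℝ (Fin n) =>
        qf (Real.cos p.1 • A - Real.sin p.1 • B) p.2)
        = fun p => ∑ i, (EuclideanSpace.proj i p.2) *
            ∑ j, ((Real.cos p.1) * A i j - (Real.sin p.1) * B i j) * (EuclideanSpace.proj j p.2) := by
      funext p
      simp [qf, dotProduct, Matrix.mulVec, Matrix.sub_apply, Matrix.smul_apply, smul_eq_mul,
        PiLp.proj_apply]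
    rw [hrw]
    refine continuous_finset_sum _ fun i _ => Continuous.mul
      ((EuclideanSpace.proj i).continuous.comp continuous_snd)
      (continuous_finset_sum _ fun j _ => Continuous.mul (Continuous.sub
        (Continuous.mul (Real.continuous_cos.comp continuous_fst) continuous_const)
        (Continuous.mul (Real.continuous_sin.comp continuous_fst) continuous_const))
        ((EuclideanSpace.proj j).continuous.comp continuous_snd))
  set K : Set (EuclideanSpace ℝ (Fin n)) := (V : Set (EuclideanSpace ℝ (Fin n))) ∩ Metric.sphere 0 1 with hK
  have hKc : IsCompact K := ((isCompact_sphere (0 : EuclideanSpace ℝ (Fin n)) 1).inter_left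
    (Submodule.closed_of_finiteDimensional V))
  have hev : ∀ v ∈ K, ∀ᶠ p : ℝ × EuclideanSpace ℝ (Fin n) in nhds (t₀, v),
      0 < qf (Real.cos p.1 • A - Real.sin p.1 • B) p.2 := by
    intro v hv
    have hv0 : v ≠ 0 := by
      intro h
      have := hv.2
      rw [h] at this
      simp at this
    have h0 : 0 < qf (Real.cos t₀ • A - Real.sin t₀ • B) v := hV v hv.1 hv0
    have hopen : IsOpen {p : ℝ × EuclideanSpace ℝ (Fin n) |
        0 < qf (Real.cos p.1 • A - Real.sin p.1 • B) p.2} := isOpen_lt continuous_const hcont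
    exact hopen.mem_nhds h0
  have hmain := hKc.eventually_forall_of_forall_eventually (P := fun t v => 0 < qf (Real.cos t • A - Real.sin t • B) v) hev
  filter_upwards [hmain] with t ht
  intro v hvV hv0
  have hn0 : ‖v‖ ≠ 0 := norm_ne_zero_iff.2 hv0
  have hw : (‖v‖⁻¹ • v) ∈ K := by
    refine ⟨V.smul_mem _ hvV, ?_⟩
    rw [mem_sphere_zero_iff_norm, norm_smul]
    simp [abs_of_nonneg (norm_nonneg v), hn0]
  have hqw := ht _ hw
  have hvw : v = ‖v‖ • (‖v‖⁻¹ • v) := by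
    rw [smul_smul, mul_inv_cancel₀ hn0, one_smul]
  calc (0:ℝ) < ‖v‖ ^ 2 * qf (Real.cos t • A - Real.sin t • B) (‖v‖⁻¹ • v) := by positivity
    _ = qf (Real.cos t • A - Real.sin t • B) (‖v‖ • (‖v‖⁻¹ • v)) := (qf_smul _ _ _).symm
    _ = qf (Real.cos t • A - Real.sin t • B) v := by rw [← hvw]

end NROrbits

open NROrbits

/-- If `f` is a negative definite real binary `n`-ic form (with `n` even) whose
dehomogenization `f(x,1)` is squarefree, then `f` is not the invariant form
`(-1)^{n/2} det(Ax - By)` of any pair of real symmetric matrices. -/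
theorem no_real_orbits_for_negative_definite (n : ℕ) (hn : 2 ≤ n) (he : Even n)
    (f : Fin (n + 1) → ℝ)
    (hneg : ∀ x y : ℝ, (x, y) ≠ (0, 0) →
      (∑ i : Fin (n + 1), f i * x ^ (n - (i : ℕ)) * y ^ (i : ℕ)) < 0)
    (hsf : Squarefree (∑ i : Fin (n + 1), Polynomial.C (f i) * Polynomial.X ^ (n - (i : ℕ)))) :
    ¬ ∃ A B : Matrix (Fin n) (Fin n) ℝ, A.IsSymm ∧ B.IsSymm ∧
      ∀ x y : ℝ, (-1 : ℝ) ^ (n / 2) * (x • A - y • B).det =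
        ∑ i : Fin (n + 1), f i * x ^ (n - (i : ℕ)) * y ^ (i : ℕ) := by
  rintro ⟨A, B, hA, hB, h⟩
  -- the path of symmetric matrices
  set M : ℝ → Matrix (Fin n) (Fin n) ℝ := fun t => Real.cos t • A - Real.sin t • B with hMdef
  have herm : ∀ t, (M t).IsHermitian := by
    intro t
    apply isHermitian_of_isSymm
    unfold Matrix.IsSymm
    rw [Matrix.transpose_sub, Matrix.transpose_smul, Matrix.transpose_smul, hA.eq, hB.eq]
  have hAh : A.IsHermitian := isHermitian_of_isSymm hA
  have hnAh : (-A).IsHermitian := by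
    have : (-A).IsSymm := by
      unfold Matrix.IsSymm
      rw [Matrix.transpose_neg, hA.eq]
    exact isHermitian_of_isSymm this
  -- the path stays invertible
  have hcs : ∀ t : ℝ, ((Real.cos t, Real.sin t) : ℝ × ℝ) ≠ (0, 0) := by
    intro t heq
    rw [Prod.ext_iff] at heq
    have h1 := heq.1
    have h2 := heq.2
    simp at h1 h2
    nlinarith [Real.sin_sq_add_cos_sq t]
  have hdet : ∀ t, (M t).det ≠ 0 := by
    intro t h0
    have hlt := hneg (Real.cos t) (Real.sin t) (hcs t)
    rw [← h (Real.cos t) (Real.sin t)] at hlt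
    rw [hMdef] at h0
    simp only at h0
    rw [h0] at hlt
    simp at hlt
  -- the number of positive eigenvalues along the path
  set p : ℝ → ℕ := fun t => posCard (herm t) with hp
  have key1 : ∀ t₀, ∀ᶠ t in nhds t₀, p t₀ ≤ p t := by
    intro t₀
    have hVpos : ∀ v ∈ eigSpan (herm t₀) (Finset.univ.filter fun i => 0 < (herm t₀).eigenvalues i),
        v ≠ 0 → 0 < qf (Real.cos t₀ • A - Real.sin t₀ • B) v := by
      intro v hv hv0
      exact qf_pos_of_mem (herm t₀) hv hv0
    have := eventually_posdef A B t₀ _ hVpos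
    filter_upwards [this] with t ht
    have h1 := sylvester_pos (herm t) _ ht
    rw [finrank_eigSpan] at h1
    exact h1
  have key2 : ∀ t₀, ∀ᶠ t in nhds t₀, negCard (herm t₀) ≤ negCard (herm t) := by
    intro t₀
    have hneg' : ∀ t : ℝ, -(M t) = Real.cos t • (-A) - Real.sin t • (-B) := by
      intro t
      rw [hMdef]
      simp only [smul_neg]
      abel
    have hVpos : ∀ v ∈ eigSpan (herm t₀) (Finset.univ.filter fun i => (herm t₀).eigenvalues i < 0),
        v ≠ 0 → 0 < qf (Real.cos t₀ • (-A) - Real.sin t₀ • (-B)) v := by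
      intro v hv hv0
      have h1 := qf_neg_of_mem (herm t₀) hv hv0
      rw [← hneg' t₀, qf_neg]
      linarith
    have := eventually_posdef (-A) (-B) t₀ _ hVpos
    filter_upwards [this] with t ht
    have hVneg : ∀ v ∈ eigSpan (herm t₀) (Finset.univ.filter fun i => (herm t₀).eigenvalues i < 0),
        v ≠ 0 → qf (M t) v < 0 := by
      intro v hv hv0
      have h1 := ht v hv hv0
      rw [← hneg' t, qf_neg] at h1
      linarith
    have h1 := sylvester_neg (herm t) _ hVneg
    rw [finrank_eigSpan] at h1
    exact h1
  have hsum : ∀ t, p t + negCard (herm t) = n := fun t => card_sum (herm t) (hdet t)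
  have hloc : IsLocallyConstant p := by
    rw [IsLocallyConstant.iff_eventually_eq]
    intro t₀
    filter_upwards [key1 t₀, key2 t₀] with t h1 h2
    have := hsum t
    have := hsum t₀
    omega
  have h0pi : p 0 = p Real.pi := hloc.apply_eq_of_preconnectedSpace 0 Real.pi
  have hM0 : M 0 = A := by
    rw [hMdef]; simp
  have hMpi : M Real.pi = -A := by
    rw [hMdef]; simp
  have hp0 : p 0 = posCard hAh := posCard_congr (herm 0) hM0 hAh
  have hppi : p Real.pi = posCard hnAh := posCard_congr (herm Real.pi) hMpi hnAh
  have hkey : posCard hAh = negCard hAh := by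
    rw [← hp0, h0pi, hppi, posCard_neg_eq hAh hnAh]
  have hdetA : A.det ≠ 0 := by
    have := hdet 0
    rwa [hM0] at this
  have hsumA : posCard hAh + negCard hAh = n := card_sum hAh hdetA
  have hhalf : negCard hAh = n / 2 := by omega
  have hpos : 0 < (-1 : ℝ) ^ (n / 2) * A.det := by
    rw [← hhalf]
    exact det_sign hAh (eigenvalues_ne_zero hAh hdetA)
  have hcontr := h 1 0
  have hdet1 : ((1:ℝ) • A - (0:ℝ) • B).det = A.det := by
    simp
  rw [hdet1] at hcontr
  have hlt := hneg 1 0 (by simp)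
  rw [← hcontr] at hlt
  linarith
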